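/- Let F : ℝⁿ → ℝ be convex and differentiable, χ : ℝⁿ → ℝ convex, C ⊆ ℝⁿ a convex set, and H a symmetric positive definite n×n real matrix. Let u, u* ∈ ℝⁿ, and suppose G is a symmetric n×n matrix with ∇F(u) − ∇F(u*) = G(u − u*) and a xᵀ H x ≤ xᵀ G x ≤ b xᵀ H x for all x ∈ ℝⁿ, where 0 < a ≤ b. Assume u* minimizes F + χ over C, set t = 2/(a + b), and let u⁺ minimize z ↦ (1/(2t))‖z − (u − t H⁻¹ ∇F(u))‖²_H + χ(z) over C. Then the proximal quasi-Newton step contracts linearly in the H-norm: ‖u⁺ − u*‖_H ≤ ((b − a)/(a + b)) ‖u − u*‖_H; equivalently, with κ = b/a, the contraction factor is |1 − κ|/(1 + κ). -/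

import Mathlib

open Matrix

/-- The squared `H`-norm `‖x‖²_H = xᵀ H x` on Euclidean space. -/
noncomputable def hNormSq {n : ℕ} (H : Matrix (Fin n) (Fin n) ℝ)
    (x : EuclideanSpace ℝ (Fin n)) : ℝ :=
  inner ℝ x (Matrix.toEuclideanLin H x)

/-- The `H`-norm `‖x‖_H = (xᵀ H x)^{1/2}` on Euclidean space. -/
noncomputable def hNorm {n : ℕ} (H : Matrix (Fin n) (Fin n) ℝ)
    (x : EuclideanSpace ℝ (Fin n)) : ℝ :=
  Real.sqrt (hNormSq H x)

set_option maxHeartbeats 1000000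

namespace PQN
open Filter Set
variable {n : ℕ}

lemma inner_toEuc (M : Matrix (Fin n) (Fin n) ℝ) (x y : EuclideanSpace ℝ (Fin n)) :
    inner ℝ x (Matrix.toEuclideanLin M y) = dotProduct (⇑x) (M.mulVec (⇑y)) := by
  simp [PiLp.inner_apply, toEuclideanLin_apply, dotProduct, mul_comm]

lemma inner_toEuc_symm (M : Matrix (Fin n) (Fin n) ℝ) (hM : M.IsSymm)
    (x y : EuclideanSpace ℝ (Fin n)) :
    (inner ℝ x (Matrix.toEuclideanLin M y) : ℝ) = inner ℝ y (Matrix.toEuclideanLin M x) := by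
  rw [inner_toEuc, inner_toEuc, dotProduct_mulVec, ← mulVec_transpose, hM.eq, dotProduct_comm]

lemma apply_inv_apply (H : Matrix (Fin n) (Fin n) ℝ) (hH : H.PosDef)
    (g : EuclideanSpace ℝ (Fin n)) :
    Matrix.toEuclideanLin H (Matrix.toEuclideanLin H⁻¹ g) = g := by
  rw [toEuclideanLin_apply, toEuclideanLin_apply]
  simp [Matrix.mulVec_mulVec, Matrix.mul_nonsing_inv _ hH.det_pos.ne'.isUnit]

lemma hNormSq_nonneg (H : Matrix (Fin n) (Fin n) ℝ) (hH : H.PosDef)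
    (x : EuclideanSpace ℝ (Fin n)) : 0 ≤ hNormSq H x := by
  rw [hNormSq, inner_toEuc]
  simpa using hH.posSemidef.dotProduct_mulVec_nonneg x.ofLp

lemma hNormSq_pos (H : Matrix (Fin n) (Fin n) ℝ) (hH : H.PosDef)
    (x : EuclideanSpace ℝ (Fin n)) (hx : x ≠ 0) : 0 < hNormSq H x := by
  rw [hNormSq, inner_toEuc]
  simpa using hH.dotProduct_mulVec_pos (x := x.ofLp) (by simpa using hx)

lemma sq_hNorm (H : Matrix (Fin n) (Fin n) ℝ) (hH : H.PosDef)
    (x : EuclideanSpace ℝ (Fin n)) : hNorm H x ^ 2 = hNormSq H x :=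
  Real.sq_sqrt (hNormSq_nonneg H hH x)

lemma hNorm_nonneg (H : Matrix (Fin n) (Fin n) ℝ) (x : EuclideanSpace ℝ (Fin n)) :
    0 ≤ hNorm H x := Real.sqrt_nonneg _

lemma expand (M : Matrix (Fin n) (Fin n) ℝ) (hM : M.IsSymm)
    (x v : EuclideanSpace ℝ (Fin n)) (l : ℝ) :
    hNormSq M (x + l • v) =
      hNormSq M x + 2 * l * inner ℝ x (Matrix.toEuclideanLin M v) + l ^ 2 * hNormSq M v := by
  simp only [hNormSq, map_add, _root_.map_smul, inner_add_left, inner_add_right,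
    real_inner_smul_left, real_inner_smul_right]
  rw [inner_toEuc_symm M hM v x]
  ring

lemma polar (M : Matrix (Fin n) (Fin n) ℝ) (hM : M.IsSymm)
    (x y : EuclideanSpace ℝ (Fin n)) :
    hNormSq M (x + y) - hNormSq M (x - y) =
      4 * inner ℝ x (Matrix.toEuclideanLin M y) := by
  simp only [hNormSq, map_add, map_sub, inner_add_left, inner_add_right,
    inner_sub_left, inner_sub_right]
  rw [inner_toEuc_symm M hM y x]
  ring

lemma parallelogram (M : Matrix (Fin n) (Fin n) ℝ)
    (x y : EuclideanSpace ℝ (Fin n)) :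
    hNormSq M (x + y) + hNormSq M (x - y) = 2 * hNormSq M x + 2 * hNormSq M y := by
  simp only [hNormSq, map_add, map_sub, inner_add_left, inner_add_right,
    inner_sub_left, inner_sub_right]
  ring

lemma aux0 (c q : ℝ) (hq : 0 ≤ q) (h : ∀ l : ℝ, 0 < l → l ≤ 1 → 0 ≤ c + l * q) :
    0 ≤ c := by
  rcases eq_or_lt_of_le hq with h0 | h0
  · simpa [← h0] using h 1 one_pos le_rfl
  · by_contra hc
    push_neg at hc
    have hl0 : 0 < min 1 (-c / (2 * q)) :=
      lt_min one_pos (div_pos (by linarith) (by linarith))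
    have := h _ hl0 (min_le_left _ _)
    have h2 : min 1 (-c / (2 * q)) * q ≤ (-c / (2 * q)) * q :=
      mul_le_mul_of_nonneg_right (min_le_right _ _) hq
    have h3 : (-c / (2 * q)) * q = -c / 2 := by
      field_simp
    linarith

lemma aux_lim (f : ℝ → ℝ) (f' c : ℝ) (hf : HasDerivAt f f' 0)
    (h : ∀ l : ℝ, 0 < l → l ≤ 1 → 0 ≤ (f l - f 0) + l * c) : 0 ≤ f' + c := by
  have hs : Tendsto (fun l : ℝ => (f l - f 0) / l + c) (nhdsWithin 0 (Ioi 0)) (nhds (f' + c)) := by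
    have := (hasDerivAt_iff_tendsto_slope.mp hf).mono_left
      (nhdsWithin_mono _ (fun x hx => ne_of_gt hx : Ioi (0:ℝ) ⊆ {(0:ℝ)}ᶜ))
    exact (this.congr (by intro x; simp [slope_def_field, div_eq_inv_mul])).add tendsto_const_nhds
  refine ge_of_tendsto hs ?_
  filter_upwards [Ioo_mem_nhdsGT_of_mem (by norm_num : (0:ℝ) ∈ Ico (0:ℝ) 1)] with l hl
  have h1 := h l hl.1 hl.2.le
  have h2 : l * c / l = c := mul_div_cancel_left₀ c (ne_of_gt hl.1)
  have h3 : 0 ≤ ((f l - f 0) + l * c) / l := div_nonneg h1 hl.1.le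
  rw [add_div, h2] at h3
  exact h3

lemma deriv_line (F : EuclideanSpace ℝ (Fin n) → ℝ) (hFdiff : Differentiable ℝ F)
    (p v : EuclideanSpace ℝ (Fin n)) :
    HasDerivAt (fun l : ℝ => F (p + l • v)) (inner ℝ (gradient F p) v) 0 := by
  have hline : HasDerivAt (fun l : ℝ => p + l • v) v 0 := by
    simpa using ((hasDerivAt_id (0:ℝ)).smul_const v).const_add p
  have := HasFDerivAt.comp_hasDerivAt 0 (by simpa using (hFdiff p).hasFDerivAt) hline
  have h2 : inner ℝ (gradient F p) v = fderiv ℝ F p v := by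
    simp [InnerProductSpace.toDual_symm_apply, gradient]
  rw [h2]; exact this


lemma hNormSq_smul (M : Matrix (Fin n) (Fin n) ℝ) (c : ℝ) (x : EuclideanSpace ℝ (Fin n)) :
    hNormSq M (c • x) = c ^ 2 * hNormSq M x := by
  simp only [hNormSq, _root_.map_smul, real_inner_smul_left, real_inner_smul_right]
  ring

lemma hNormSq_eq_zero (H : Matrix (Fin n) (Fin n) ℝ) (hH : H.PosDef)
    (x : EuclideanSpace ℝ (Fin n)) (hx : hNormSq H x = 0) : x = 0 := by
  by_contra h
  exact (hNormSq_pos H hH x h).ne' hx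

end PQN


/-- Linear contraction of the proximal quasi-Newton step. Let `F` be convex and
differentiable, `χ` convex, `C` convex, `H` symmetric positive definite. Suppose `G` is
symmetric with `∇F(u) − ∇F(u*) = G(u − u*)` and `a xᵀHx ≤ xᵀGx ≤ b xᵀHx` for all `x`,
`0 < a ≤ b`. If `u*` minimizes `F + χ` over `C`, `t = 2/(a+b)`, and `u⁺` minimizes
`z ↦ (1/(2t))‖z − (u − t H⁻¹ ∇F(u))‖²_H + χ(z)` over `C`, then
`‖u⁺ − u*‖_H ≤ ((b − a)/(a + b)) ‖u − u*‖_H`. -/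
theorem prox_quasi_newton_linear_contraction (n : ℕ)
    (F : EuclideanSpace ℝ (Fin n) → ℝ)
    (hF : ConvexOn ℝ Set.univ F) (hFdiff : Differentiable ℝ F)
    (χ : EuclideanSpace ℝ (Fin n) → ℝ) (hχ : ConvexOn ℝ Set.univ χ)
    (C : Set (EuclideanSpace ℝ (Fin n))) (hC : Convex ℝ C)
    (H : Matrix (Fin n) (Fin n) ℝ) (hH : H.PosDef)
    (u ustar : EuclideanSpace ℝ (Fin n))
    (G : Matrix (Fin n) (Fin n) ℝ) (hGsymm : G.IsSymm)
    (hGrad : gradient F u - gradient F ustar = Matrix.toEuclideanLin G (u - ustar))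
    (a b : ℝ) (ha : 0 < a) (hab : a ≤ b)
    (hlow : ∀ x : EuclideanSpace ℝ (Fin n), a * hNormSq H x ≤ hNormSq G x)
    (hhigh : ∀ x : EuclideanSpace ℝ (Fin n), hNormSq G x ≤ b * hNormSq H x)
    (hustarC : ustar ∈ C)
    (hustar : ∀ z ∈ C, F ustar + χ ustar ≤ F z + χ z)
    (uplus : EuclideanSpace ℝ (Fin n)) (huplusC : uplus ∈ C)
    (huplus : ∀ z ∈ C,
      (1 / (2 * (2 / (a + b)))) * hNormSq H
          (uplus - (u - (2 / (a + b)) • Matrix.toEuclideanLin H⁻¹ (gradient F u))) +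
          χ uplus ≤
        (1 / (2 * (2 / (a + b)))) * hNormSq H
          (z - (u - (2 / (a + b)) • Matrix.toEuclideanLin H⁻¹ (gradient F u))) + χ z) :
    hNorm H (uplus - ustar) ≤ (b - a) / (a + b) * hNorm H (u - ustar) := by
  have habp : (0:ℝ) < a + b := by linarith
  set t : ℝ := 2 / (a + b) with hts
  have ht : 0 < t := by positivity
  set κ : ℝ := 1 / (2 * t) with hκs
  have hκ : 0 < κ := by positivity
  have h2κ : 2 * κ * t = 1 := by rw [hκs]; field_simp
  have hHsym : H.IsSymm := by
    rw [Matrix.IsSymm, ← Matrix.conjTranspose_eq_transpose_of_trivial]; exact hH.1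
  set g : EuclideanSpace ℝ (Fin n) := gradient F u with hgs
  set w : EuclideanSpace ℝ (Fin n) := u - t • Matrix.toEuclideanLin H⁻¹ g with hws
  -- Step A: variational inequality for uplus
  have hA : ∀ z ∈ C, 0 ≤ 2 * κ * (inner ℝ (uplus - w) (Matrix.toEuclideanLin H (z - uplus)) : ℝ)
      + (χ z - χ uplus) := by
    intro z hz
    refine PQN.aux0 _ (κ * hNormSq H (z - uplus))
      (mul_nonneg hκ.le (PQN.hNormSq_nonneg H hH _)) ?_
    intro l hl0 hl1
    have hcomb : (1 - l) • uplus + l • z = uplus + l • (z - uplus) := by module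
    have hzl : uplus + l • (z - uplus) ∈ C := by
      have h1 := hC huplusC hz (by linarith : (0:ℝ) ≤ 1 - l) hl0.le (by ring)
      rwa [hcomb] at h1
    have hχl : χ (uplus + l • (z - uplus)) ≤ (1 - l) * χ uplus + l * χ z := by
      have h2 := hχ.2 (Set.mem_univ uplus) (Set.mem_univ z)
        (by linarith : (0:ℝ) ≤ 1 - l) hl0.le (by ring)
      rwa [hcomb, smul_eq_mul, smul_eq_mul] at h2
    have h1 := huplus _ hzl
    have hexp : hNormSq H (uplus + l • (z - uplus) - w)
        = hNormSq H (uplus - w)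
          + 2 * l * (inner ℝ (uplus - w) (Matrix.toEuclideanLin H (z - uplus)) : ℝ)
          + l ^ 2 * hNormSq H (z - uplus) := by
      rw [show uplus + l • (z - uplus) - w = (uplus - w) + l • (z - uplus) from by abel]
      exact PQN.expand H hHsym _ _ _
    rw [hexp] at h1
    have h4 : 0 ≤ l * ((2 * κ * (inner ℝ (uplus - w) (Matrix.toEuclideanLin H (z - uplus)) : ℝ)
        + (χ z - χ uplus)) + l * (κ * hNormSq H (z - uplus))) := by nlinarith [h1, hχl]
    exact (mul_nonneg_iff_of_pos_left hl0).mp h4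
  -- Step B: variational inequality for ustar
  have hB : ∀ z ∈ C, 0 ≤ (inner ℝ (gradient F ustar) (z - ustar) : ℝ) + (χ z - χ ustar) := by
    intro z hz
    refine PQN.aux_lim (fun l => F (ustar + l • (z - ustar))) _ _
      (PQN.deriv_line F hFdiff ustar _) ?_
    intro l hl0 hl1
    have hcomb : (1 - l) • ustar + l • z = ustar + l • (z - ustar) := by module
    have hzl : ustar + l • (z - ustar) ∈ C := by
      have h1 := hC hustarC hz (by linarith : (0:ℝ) ≤ 1 - l) hl0.le (by ring)
      rwa [hcomb] at h1
    have hχl : χ (ustar + l • (z - ustar)) ≤ (1 - l) * χ ustar + l * χ z := by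
      have h2 := hχ.2 (Set.mem_univ ustar) (Set.mem_univ z)
        (by linarith : (0:ℝ) ≤ 1 - l) hl0.le (by ring)
      rwa [hcomb, smul_eq_mul, smul_eq_mul] at h2
    have h1 := hustar _ hzl
    simp only [zero_smul, add_zero]
    linarith
  -- Step C: combine
  set e : EuclideanSpace ℝ (Fin n) := u - ustar with hes
  set d : EuclideanSpace ℝ (Fin n) := uplus - ustar with hds
  have hAH : Matrix.toEuclideanLin H (Matrix.toEuclideanLin H⁻¹ g) = g :=
    PQN.apply_inv_apply H hH g
  have hX : (inner ℝ (uplus - w) (Matrix.toEuclideanLin H (ustar - uplus)) : ℝ)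
      = -(hNormSq H d) + (inner ℝ d (Matrix.toEuclideanLin H e) : ℝ)
        - t * (inner ℝ d g : ℝ) := by
    rw [PQN.inner_toEuc_symm H hHsym]
    have h2 : uplus - w = (d - e) + t • (Matrix.toEuclideanLin H⁻¹ g) := by
      rw [hws, hds, hes]; abel
    have h3 : ustar - uplus = -d := by rw [hds]; abel
    rw [h2, h3, map_add, map_sub, _root_.map_smul, hAH]
    simp only [inner_neg_left, inner_add_right, inner_sub_right, real_inner_smul_right]
    have h5 : hNormSq H d = (inner ℝ d (Matrix.toEuclideanLin H d) : ℝ) := rfl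
    rw [h5]; ring
  have hC2 : hNormSq H d ≤ (inner ℝ d (Matrix.toEuclideanLin H e) : ℝ)
      - t * (inner ℝ d (Matrix.toEuclideanLin G e) : ℝ) := by
    have hA1 := hA ustar hustarC
    have hB1 := hB uplus huplusC
    rw [hX] at hA1
    have hB1' : 0 ≤ (inner ℝ d (gradient F ustar) : ℝ) + (χ uplus - χ ustar) := by
      rwa [real_inner_comm, ← hds] at hB1
    -- multiply hA1 by t and add t*hB1'
    have hsum : 0 ≤ (2 * κ * t) * (-(hNormSq H d) + (inner ℝ d (Matrix.toEuclideanLin H e) : ℝ)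
        - t * (inner ℝ d g : ℝ)) + t * ((inner ℝ d (gradient F ustar) : ℝ)) := by
      have hA1t := mul_nonneg ht.le hA1
      have hB1t := mul_nonneg ht.le hB1'
      nlinarith [hA1t, hB1t]
    rw [h2κ, one_mul] at hsum
    have hgr : (inner ℝ d g : ℝ) - (inner ℝ d (gradient F ustar) : ℝ)
        = (inner ℝ d (Matrix.toEuclideanLin G e) : ℝ) := by
      rw [← inner_sub_right, hGrad]
    have hgr' : t * (inner ℝ d g : ℝ) - t * (inner ℝ d (gradient F ustar) : ℝ)
        = t * (inner ℝ d (Matrix.toEuclideanLin G e) : ℝ) := by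
      linear_combination t * hgr
    linarith [hsum, hgr']
  -- Step D: bilinear bound
  set ρ : ℝ := (b - a) / (a + b) with hρs
  have hρ0 : 0 ≤ ρ := div_nonneg (by linarith) habp.le
  have hta : 1 - t * a = ρ := by rw [hts, hρs]; field_simp; ring
  have htb : t * b - 1 = ρ := by rw [hts, hρs]; field_simp; ring
  have hq' : ∀ x : EuclideanSpace ℝ (Fin n),
      -(ρ * hNormSq H x) ≤ hNormSq H x - t * hNormSq G x ∧
      hNormSq H x - t * hNormSq G x ≤ ρ * hNormSq H x := by
    intro x
    have h1 := mul_le_mul_of_nonneg_left (hlow x) ht.le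
    have h2 := mul_le_mul_of_nonneg_left (hhigh x) ht.le
    have h3 := PQN.hNormSq_nonneg H hH x
    constructor <;> nlinarith [h1, h2, h3, hta, htb]
  have hbil : ∀ x y : EuclideanSpace ℝ (Fin n),
      (inner ℝ x (Matrix.toEuclideanLin H y) : ℝ) - t * (inner ℝ x (Matrix.toEuclideanLin G y) : ℝ)
      ≤ ρ / 2 * (hNormSq H x + hNormSq H y) := by
    intro x y
    have hp := PQN.polar H hHsym x y
    have hpG := PQN.polar G hGsymm x y
    have hpar := PQN.parallelogram H x y
    have hpG' : t * hNormSq G (x + y) - t * hNormSq G (x - y)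
        = 4 * (t * (inner ℝ x (Matrix.toEuclideanLin G y) : ℝ)) := by
      linear_combination t * hpG
    have hpar' : ρ * hNormSq H (x + y) + ρ * hNormSq H (x - y)
        = ρ * (2 * hNormSq H x + 2 * hNormSq H y) := by
      linear_combination ρ * hpar
    have h1 := (hq' (x + y)).2
    have h2 := (hq' (x - y)).1
    linarith
  -- Final assembly
  show hNorm H d ≤ ρ * hNorm H e
  by_cases hd0 : d = 0
  · rw [hd0]
    have : hNorm H (0 : EuclideanSpace ℝ (Fin n)) = 0 := by
      simp [hNorm, hNormSq]
    rw [this]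
    exact mul_nonneg hρ0 (PQN.hNorm_nonneg H e)
  · have hQd : 0 < hNormSq H d := PQN.hNormSq_pos H hH d hd0
    have hNd : 0 < hNorm H d := Real.sqrt_pos.mpr hQd
    by_cases he0 : e = 0
    · exfalso
      rw [he0] at hC2
      simp only [map_zero, inner_zero_right, mul_zero, sub_zero] at hC2
      linarith
    · have hQe : 0 < hNormSq H e := PQN.hNormSq_pos H hH e he0
      have hNe : 0 < hNorm H e := Real.sqrt_pos.mpr hQe
      set Nd := hNorm H d with hNds
      set Ne := hNorm H e with hNes
      set s : ℝ := Real.sqrt (Ne / Nd) with hss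
      have hs0 : 0 < s := Real.sqrt_pos.mpr (by positivity)
      have hs2 : s ^ 2 = Ne / Nd := Real.sq_sqrt (by positivity)
      have h5 := hbil (s • d) (s⁻¹ • e)
      simp only [real_inner_smul_left, _root_.map_smul, real_inner_smul_right,
        PQN.hNormSq_smul] at h5
      have hss' : s⁻¹ * (s * (inner ℝ d (Matrix.toEuclideanLin H e) : ℝ))
          = (inner ℝ d (Matrix.toEuclideanLin H e) : ℝ) := by
        field_simp
      have hss'' : s⁻¹ * (s * (inner ℝ d (Matrix.toEuclideanLin G e) : ℝ))
          = (inner ℝ d (Matrix.toEuclideanLin G e) : ℝ) := by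
        field_simp
      rw [hss', hss''] at h5
      have hQdN : hNormSq H d = Nd ^ 2 := (PQN.sq_hNorm H hH d).symm
      have hQeN : hNormSq H e = Ne ^ 2 := (PQN.sq_hNorm H hH e).symm
      have hrhs : s ^ 2 * hNormSq H d + (s⁻¹) ^ 2 * hNormSq H e = 2 * (Nd * Ne) := by
        rw [hQdN, hQeN, inv_pow, hs2]
        field_simp
        ring
      rw [hrhs] at h5
      -- hC2 : Nd^2 ≤ B' ≤ ρ/2 * 2 * Nd * Ne
      rw [hQdN] at hC2
      nlinarith [hC2, h5, hNd]
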